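/- Let K > 1, let Λ = {λ_1, λ_2, ...} ⊂ ℝ^d be bounded and countable, and F_Λ(x) = ∑_n 2^{-n}(x - λ_n)|x - λ_n|^{1/K - 1}. Then F_Λ is injective. -/

import Mathlib

open scoped RealInnerProductSpace

/-- The radial stretch is strictly monotone. -/
lemma radial_stretch_mono {E : Type*} [NormedAddCommGroup E] [InnerProductSpace ℝ E]
    (α : ℝ) (hα : 0 < α) (hα1 : α < 1) (a b : E) (hab : a ≠ b) :
    0 < ⟪(‖a‖ ^ (α - 1) : ℝ) • a - (‖b‖ ^ (α - 1) : ℝ) • b, a - b⟫ := by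
  set p := ‖a‖ with hp
  set q := ‖b‖ with hq
  set s := p ^ (α - 1) with hs
  set t := q ^ (α - 1) with ht
  have hp0 : 0 ≤ p := norm_nonneg a
  have hq0 : 0 ≤ q := norm_nonneg b
  have hs0 : 0 ≤ s := Real.rpow_nonneg hp0 _
  have ht0 : 0 ≤ t := Real.rpow_nonneg hq0 _
  have key : ⟪(s : ℝ) • a - (t : ℝ) • b, a - b⟫ = s * p ^ 2 + t * q ^ 2 - (s + t) * ⟪a, b⟫ := by
    rw [inner_sub_left, inner_sub_right, inner_sub_right, real_inner_smul_left,
      real_inner_smul_left, real_inner_smul_left, real_inner_smul_left,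
      real_inner_self_eq_norm_sq, real_inner_self_eq_norm_sq, real_inner_comm b a]
    ring
  rw [key]
  have hsp : ∀ r : ℝ, 0 ≤ r → r ^ (α - 1) * r ^ 2 = r ^ (α + 1) := by
    intro r hr
    rcases eq_or_lt_of_le hr with h | h
    · rw [← h, Real.zero_rpow (by linarith), Real.zero_rpow (by linarith)]; ring
    · rw [← Real.rpow_natCast r 2, ← Real.rpow_add h]
      congr 1
      push_cast
      ring
  have hcs : ⟪a, b⟫ ≤ p * q := real_inner_le_norm a b
  by_cases hpq : p = q
  · -- equal norms
    have hple : 0 < p := by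
      rcases eq_or_lt_of_le hp0 with h | h
      · exfalso; apply hab
        have ha0 : a = 0 := norm_eq_zero.mp h.symm
        have hb0 : b = 0 := norm_eq_zero.mp (by rw [← hq, ← hpq, ← h])
        rw [ha0, hb0]
      · exact h
    have hlt : ⟪a, b⟫ < p * q := by
      rcases lt_or_eq_of_le hcs with h | h
      · exact h
      · exfalso; apply hab
        have := inner_eq_norm_mul_iff_real.mp h
        rw [← hq, ← hpq] at this
        exact smul_right_injective E (ne_of_gt hple) this
    have hst : s = t := by rw [hs, ht, hpq]
    have hspos : 0 < s := Real.rpow_pos_of_pos hple _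
    rw [hst] at hspos ⊢
    have hp2 : p ^ 2 = p * q := by rw [hpq]; ring
    have hq2 : q ^ 2 = p * q := by rw [hpq]; ring
    nlinarith [mul_pos hspos (sub_pos.mpr hlt), hp2, hq2]
  · -- distinct norms
    have h1 : s * p ^ 2 + t * q ^ 2 - (s + t) * ⟪a, b⟫
        ≥ s * p ^ 2 + t * q ^ 2 - (s + t) * (p * q) := by
      nlinarith [hcs, hs0, ht0]
    have h2 : s * p ^ 2 + t * q ^ 2 - (s + t) * (p * q)
        = (p ^ α - q ^ α) * (p - q) := by
      have e1 : s * p ^ 2 = p ^ (α + 1) := hsp p hp0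
      have e2 : t * q ^ 2 = q ^ (α + 1) := hsp q hq0
      have e3 : s * p = p ^ α := by
        rcases eq_or_lt_of_le hp0 with h | h
        · rw [hs, ← h, Real.zero_rpow (by linarith), Real.zero_rpow (ne_of_gt hα)]; ring
        · rw [hs, Real.rpow_sub_one (ne_of_gt h)]; field_simp
      have e4 : t * q = q ^ α := by
        rcases eq_or_lt_of_le hq0 with h | h
        · rw [ht, ← h, Real.zero_rpow (by linarith), Real.zero_rpow (ne_of_gt hα)]; ring
        · rw [ht, Real.rpow_sub_one (ne_of_gt h)]; field_simp
      have e5 : p ^ (α + 1) = p ^ α * p := by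
        rcases eq_or_lt_of_le hp0 with h | h
        · rw [← h, Real.zero_rpow (by linarith), Real.zero_rpow (ne_of_gt hα)]; ring
        · rw [Real.rpow_add h, Real.rpow_one]
      have e6 : q ^ (α + 1) = q ^ α * q := by
        rcases eq_or_lt_of_le hq0 with h | h
        · rw [← h, Real.zero_rpow (by linarith), Real.zero_rpow (ne_of_gt hα)]; ring
        · rw [Real.rpow_add h, Real.rpow_one]
      nlinarith [e1, e2, e3, e4, e5, e6]
    have h3 : 0 < (p ^ α - q ^ α) * (p - q) := by
      rcases lt_or_gt_of_ne hpq with h | h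
      · have : p ^ α < q ^ α := Real.rpow_lt_rpow hp0 h hα
        exact mul_pos_of_neg_of_neg (by linarith) (by linarith)
      · have : q ^ α < p ^ α := Real.rpow_lt_rpow hq0 h hα
        exact mul_pos (by linarith) (by linarith)
    linarith

theorem F_Lambda_injective (d : ℕ) (K : ℝ) (hK : 1 < K)
    (lam : ℕ → EuclideanSpace ℝ (Fin d)) (hbdd : ∃ M : ℝ, ∀ n, ‖lam n‖ ≤ M)
    (F : EuclideanSpace ℝ (Fin d) → EuclideanSpace ℝ (Fin d))
    (hF : F = fun x => ∑' n : ℕ,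
        ((2 : ℝ) ^ (n + 1))⁻¹ • (‖x - lam n‖ ^ (1 / K - 1 : ℝ) • (x - lam n))) :
    Function.Injective F := by
  set α : ℝ := 1 / K with hαdef
  have hα : 0 < α := by positivity
  have hα1 : α < 1 := by
    rw [hαdef, div_lt_one (by linarith)]; linarith
  obtain ⟨M, hM⟩ := hbdd
  set g : EuclideanSpace ℝ (Fin d) → ℕ → EuclideanSpace ℝ (Fin d) :=
    fun x n => ((2 : ℝ) ^ (n + 1))⁻¹ • (‖x - lam n‖ ^ (α - 1 : ℝ) • (x - lam n)) with hg
  have hnorm : ∀ (x : EuclideanSpace ℝ (Fin d)) n,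
      ‖g x n‖ ≤ ((2 : ℝ) ^ (n + 1))⁻¹ * (‖x‖ + |M| + 1) ^ α := by
    intro x n
    have h2 : (0:ℝ) < (2 : ℝ) ^ (n + 1) := by positivity
    rw [hg]
    simp only [norm_smul, Real.norm_eq_abs]
    rw [abs_of_pos (by positivity), abs_of_nonneg (Real.rpow_nonneg (norm_nonneg _) _)]
    rw [mul_le_mul_iff_right₀ (by positivity)]
    have hb : ‖x - lam n‖ ≤ ‖x‖ + |M| + 1 := by
      have := norm_sub_le x (lam n)
      have := hM n
      have : ‖lam n‖ ≤ |M| := le_trans (hM n) (le_abs_self M)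
      linarith [norm_sub_le x (lam n)]
    rcases eq_or_ne (x - lam n) 0 with h | h
    · rw [h, norm_zero, mul_zero]
      positivity
    · have hnz : (0:ℝ) < ‖x - lam n‖ := norm_pos_iff.mpr h
      rw [Real.rpow_sub_one (ne_of_gt hnz)]
      rw [div_mul_cancel₀ _ (ne_of_gt hnz)]
      exact Real.rpow_le_rpow (le_of_lt hnz) hb (le_of_lt hα)
  have hgeo : ∀ C : ℝ, Summable (fun n : ℕ => ((2 : ℝ) ^ (n + 1))⁻¹ * C) := by
    intro C
    have : Summable (fun n : ℕ => ((2 : ℝ)⁻¹) ^ (n + 1)) :=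
      (summable_geometric_of_lt_one (by norm_num) (by norm_num)).comp_injective
        (add_left_injective 1)
    simpa [inv_pow] using this.mul_right C
  have hsum : ∀ x, Summable (g x) := by
    intro x
    apply Summable.of_norm
    exact Summable.of_nonneg_of_le (fun n => norm_nonneg _) (hnorm x) (hgeo _)
  intro x y hxy
  by_contra hne
  set v := x - y with hv
  have hv0 : v ≠ 0 := sub_ne_zero.mpr hne
  have hinner : ∀ z, ⟪v, F z⟫ = ∑' n, ⟪v, g z n⟫ := by
    intro z
    rw [hF]
    simp only
    exact (ContinuousLinearMap.map_tsum (innerSL ℝ v) (hsum z)).symm ▸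
      ((innerSL ℝ v).map_tsum (hsum z))
  have hsum' : ∀ z, Summable (fun n => ⟪v, g z n⟫) := by
    intro z
    exact (hsum z).map (innerSL ℝ v) (innerSL ℝ v).continuous
  have h0 : (0:ℝ) = ∑' n, (⟪v, g x n⟫ - ⟪v, g y n⟫) := by
    rw [Summable.tsum_sub (hsum' x) (hsum' y), ← hinner x, ← hinner y, hxy]
    ring
  have hpos : 0 < ∑' n, (⟪v, g x n⟫ - ⟪v, g y n⟫) := by
    have hterm : ∀ n, 0 < ⟪v, g x n⟫ - ⟪v, g y n⟫ := by
      intro n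
      have h2 : (0:ℝ) < ((2 : ℝ) ^ (n + 1))⁻¹ := by positivity
      have hab : x - lam n ≠ y - lam n := fun h => hne (by
        have := congrArg (· + lam n) h
        simpa using this)
      have key := radial_stretch_mono α hα hα1 (x - lam n) (y - lam n) hab
      have hab2 : (x - lam n) - (y - lam n) = v := by rw [hv]; abel
      rw [hab2] at key
      have : ⟪v, g x n⟫ - ⟪v, g y n⟫
          = ((2 : ℝ) ^ (n + 1))⁻¹ *
            ⟪(‖x - lam n‖ ^ (α - 1 : ℝ)) • (x - lam n)
              - (‖y - lam n‖ ^ (α - 1 : ℝ)) • (y - lam n), v⟫ := by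
        rw [hg]
        simp only [real_inner_smul_right, real_inner_smul_left, inner_sub_left,
          inner_sub_right]
        rw [real_inner_comm v x, real_inner_comm v y, real_inner_comm v (lam n)]
        ring
      rw [this]
      exact mul_pos h2 key
    exact Summable.tsum_pos ((hsum' x).sub (hsum' y)) (fun n => le_of_lt (hterm n)) 0 (hterm 0)
  linarith [h0, hpos]
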